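/- Metric regularity from quadratic growth: let f:ℝⁿ→ℝ be convex-subdifferentiable near the minimizer set 𝔐 = argmin f (with min value f̲), and suppose the lower quadratic growth (𝔠₁/2)dist(x,𝔐)² ≤ f(x)−f̲ holds for x near 𝔐. Then for such x, dist(x, (∂f)^{-1}(0)) ≤ (2/𝔠₁) dist(0, ∂f(x)), i.e., the subdifferential is metrically regular at rate 2/𝔠₁ at every (x*,0) with x* ∈ 𝔐. -/

import Mathlib

open Metric

/-- Convex subdifferential `∂f(x) = {v : f(x) − f(y) ≤ ⟨v, x−y⟩ ∀y}`. -/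
def subdiff {n : ℕ} (f : EuclideanSpace ℝ (Fin n) → ℝ)
    (x : EuclideanSpace ℝ (Fin n)) : Set (EuclideanSpace ℝ (Fin n)) :=
  {v | ∀ y, f x - f y ≤ (inner ℝ v (x - y) : ℝ)}

lemma le_infDist_aux {E : Type*} [MetricSpace E] {s : Set E} (hs : s.Nonempty)
    {x : E} {a : ℝ} (h : ∀ y ∈ s, a ≤ dist x y) : a ≤ infDist x s := by
  by_contra hlt
  push_neg at hlt
  obtain ⟨y, hy, hdy⟩ := (infDist_lt_iff hs).mp hlt
  exact absurd (h y hy) (not_le.mpr hdy)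

/-- metric regularity from quadratic growth. If `f` attains its minimum
`f̲` on `𝔐 = {x | f x = f̲} ≠ ∅`, is subdifferentiable near `𝔐`, and satisfies the
lower quadratic growth `(𝔠₁/2)dist(x,𝔐)² ≤ f(x)−f̲` for `dist(x,𝔐) ≤ r`, then for
such `x`, `dist(x, (∂f)⁻¹(0)) ≤ (2/𝔠₁) dist(0, ∂f(x))`. -/
theorem stmt18 {n : ℕ} (f : EuclideanSpace ℝ (Fin n) → ℝ) (fmin r c1 : ℝ)
    (hr : 0 < r) (hc1 : 0 < c1)
    (hf_lb : ∀ x, fmin ≤ f x)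
    (hMne : {x : EuclideanSpace ℝ (Fin n) | f x = fmin}.Nonempty)
    (hQG : ∀ x, infDist x {z : EuclideanSpace ℝ (Fin n) | f z = fmin} ≤ r →
      (c1 / 2) * (infDist x {z : EuclideanSpace ℝ (Fin n) | f z = fmin}) ^ 2
        ≤ f x - fmin)
    (hsub : ∀ x, infDist x {z : EuclideanSpace ℝ (Fin n) | f z = fmin} ≤ r →
      (subdiff f x).Nonempty) :
    ∀ x, infDist x {z : EuclideanSpace ℝ (Fin n) | f z = fmin} ≤ r →
      infDist x {y : EuclideanSpace ℝ (Fin n) | (0 : EuclideanSpace ℝ (Fin n)) ∈ subdiff f y}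
        ≤ (2 / c1) * infDist (0 : EuclideanSpace ℝ (Fin n)) (subdiff f x) := by
  intro x hx
  set M := {z : EuclideanSpace ℝ (Fin n) | f z = fmin} with hM
  set d := infDist x M with hd
  have hd0 : 0 ≤ d := infDist_nonneg
  have hMsub : M ⊆ {y : EuclideanSpace ℝ (Fin n) | (0 : EuclideanSpace ℝ (Fin n)) ∈ subdiff f y} := by
    intro z hz
    intro y
    show f z - f y ≤ (inner ℝ (0 : EuclideanSpace ℝ (Fin n)) (z - y) : ℝ)
    rw [inner_zero_left]
    have := hf_lb y
    have hz' : f z = fmin := hz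
    linarith
  have hle : infDist x {y : EuclideanSpace ℝ (Fin n) | (0 : EuclideanSpace ℝ (Fin n)) ∈ subdiff f y} ≤ d :=
    infDist_le_infDist_of_subset hMsub hMne
  rcases le_or_gt d 0 with hdz | hdpos
  · have : d = 0 := le_antisymm hdz hd0
    have h0 : (0:ℝ) ≤ (2 / c1) * infDist (0 : EuclideanSpace ℝ (Fin n)) (subdiff f x) :=
      mul_nonneg (by positivity) infDist_nonneg
    linarith
  · refine le_trans hle ?_
    have hS := hsub x hx
    have key : ∀ v ∈ subdiff f x, (c1 / 2) * d ≤ dist (0 : EuclideanSpace ℝ (Fin n)) v := by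
      intro v hv
      have hquad : (c1 / 2) * d ^ 2 ≤ f x - fmin := hQG x hx
      rcases eq_or_ne (‖v‖ : ℝ) 0 with hv0 | hv0
      · -- then f x = fmin, so x ∈ M and d = 0, contradiction
        exfalso
        have hxM : x ∈ M := by
          have hvz : v = 0 := by simpa using hv0
          have h1 : ∀ y, f x - f y ≤ 0 := by
            intro y
            have := hv y
            rw [hvz] at this
            simpa only [inner_zero_left] using this
          obtain ⟨z, hz⟩ := hMne
          have hz' : f z = fmin := hz
          show f x = fmin
          have := h1 z
          have := hf_lb x
          linarith
        have : d = 0 := by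
          rw [hd]
          exact infDist_zero_of_mem hxM
        linarith
      · have hvpos : 0 < ‖v‖ := lt_of_le_of_ne (norm_nonneg v) (Ne.symm hv0)
        -- f x - fmin ≤ ‖v‖ * d
        have hfd : f x - fmin ≤ ‖v‖ * d := by
          have h2 : (f x - fmin) / ‖v‖ ≤ d := by
            rw [hd]
            apply le_infDist_aux hMne
            intro z hz
            have hz' : f z = fmin := hz
            have h3 : f x - f z ≤ ‖v‖ * ‖x - z‖ := by
              calc f x - f z ≤ (inner ℝ v (x - z) : ℝ) := hv z
                _ ≤ ‖v‖ * ‖x - z‖ := real_inner_le_norm v (x - z)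
            rw [hz'] at h3
            rw [div_le_iff₀ hvpos]
            calc f x - fmin ≤ ‖v‖ * ‖x - z‖ := h3
              _ = ‖v‖ * dist x z := by rw [dist_eq_norm]
              _ = dist x z * ‖v‖ := mul_comm _ _
          calc f x - fmin = (f x - fmin) / ‖v‖ * ‖v‖ := by field_simp
            _ ≤ d * ‖v‖ := by
                apply mul_le_mul_of_nonneg_right h2 (norm_nonneg v)
            _ = ‖v‖ * d := mul_comm _ _
        have : (c1 / 2) * d ^ 2 ≤ ‖v‖ * d := le_trans hquad hfd
        have hcd : (c1 / 2) * d ≤ ‖v‖ := by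
          nlinarith
        calc (c1 / 2) * d ≤ ‖v‖ := hcd
          _ = dist (0 : EuclideanSpace ℝ (Fin n)) v := by
              rw [dist_eq_norm, zero_sub, norm_neg]
    have h4 : (c1 / 2) * d ≤ infDist (0 : EuclideanSpace ℝ (Fin n)) (subdiff f x) :=
      le_infDist_aux hS key
    have h5 : d ≤ (2 / c1) * ((c1 / 2) * d) := by
      rw [div_mul_eq_mul_div, le_div_iff₀ hc1]
      ring_nf
      nlinarith
    calc d ≤ (2 / c1) * ((c1 / 2) * d) := h5
      _ ≤ (2 / c1) * infDist (0 : EuclideanSpace ℝ (Fin n)) (subdiff f x) := by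
          apply mul_le_mul_of_nonneg_left h4 (by positivity)
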